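/- arXiv:1812.03567 — 4 statements merged into one kernel-verified Lean document; each statement's English description precedes it below -/
import Mathlib

section
/- Persistence of chain connectivity for large coupling (Proposition 4.3): Let (ρ, u) be a global strong solution (T* = ∞) of the pressureless Euler alignment system satisfying the connectivity assumption, let T be the connectivity time, and let η > 0 be such that the uniform fluctuation bound |δu(t)|_∞ ≤ |δu(0)|_∞ e^{−κ m t} + (2/m)|δu(0)|₂ e^{−κ η t} holds for all t < T. If κ ≥ κ₀ := (1/(r m))·(½|δu(0)|_∞ + η⁻¹|δu(0)|₂), then T = ∞; that is, for all t ≥ 0 and all x, y ∈ supp ρ₀ with |x − y| ≤ r one has |X(t,x) − X(t,y)| ≤ 3r. -/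
open MeasureTheory Metric Set Filter
open scoped Topology ENNReal

noncomputable section

/-- The (topological) support of a measure on Euclidean space: points all of whose
neighborhoods have positive mass. -/
def mSupp {d : ℕ} (μ : Measure (EuclideanSpace ℝ (Fin d))) : Set (EuclideanSpace ℝ (Fin d)) :=
  {x | ∀ ε > 0, 0 < μ (Metric.ball x ε)}

/-- `S` is chain connected at scale `r` with at most `n` balls: every pair of points of `S`
is connected by a chain of at most `n` closed balls of radius `r` with centers in `S`,
consecutive balls intersecting, the first point in the first ball and the second in the last. -/
def ChainConnectedN {d : ℕ} (S : Set (EuclideanSpace ℝ (Fin d))) (r : ℝ) (n : ℕ) : Prop :=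
  ∀ x ∈ S, ∀ y ∈ S, ∃ k : ℕ, 1 ≤ k ∧ k ≤ n ∧ ∃ c : ℕ → EuclideanSpace ℝ (Fin d),
    (∀ i < k, c i ∈ S) ∧
    (∀ i, i + 1 < k →
      (Metric.closedBall (c i) r ∩ Metric.closedBall (c (i + 1)) r).Nonempty) ∧
    x ∈ Metric.closedBall (c 0) r ∧ y ∈ Metric.closedBall (c (k - 1)) r

/-- A global (`T* = ∞`) strong solution of the pressureless Euler alignment system with
communication kernel `φ` and coupling strength `κ`:  a `C¹` velocity field `u` on
`[0,∞) × ℝ^d`, its flow map `X`, a compactly supported Borel probability measure `ρ₀`,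
with `ρ(t) = X(t,·)_# ρ₀`, satisfying the momentum equation
`∂ₜ u + (u·∇)u = κ ∫ φ(|x-y|)(u(y) - u(x)) dρ(t)(y)` on the support of `ρ(t)`. -/
structure EulerAlign (d : ℕ) (φ : ℝ → ℝ) (κ : ℝ) where
  u : ℝ → EuclideanSpace ℝ (Fin d) → EuclideanSpace ℝ (Fin d)
  X : ℝ → EuclideanSpace ℝ (Fin d) → EuclideanSpace ℝ (Fin d)
  ρ₀ : Measure (EuclideanSpace ℝ (Fin d))
  prob : IsProbabilityMeasure ρ₀
  cpt : IsCompact (mSupp ρ₀)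
  u_smooth : ContDiffOn ℝ 1 (fun p : ℝ × EuclideanSpace ℝ (Fin d) => u p.1 p.2)
      (Set.Ici (0:ℝ) ×ˢ Set.univ)
  flow_zero : ∀ x, X 0 x = x
  flow_deriv : ∀ x, ∀ t ∈ Set.Ici (0:ℝ),
      HasDerivWithinAt (fun s => X s x) (u t (X t x)) (Set.Ici (0:ℝ)) t
  momentum : ∀ t ∈ Set.Ici (0:ℝ), ∀ x ∈ mSupp (ρ₀.map (X t)),
      derivWithin (fun s => u s x) (Set.Ici (0:ℝ)) t + fderiv ℝ (u t) x (u t x)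
        = κ • ∫ y, φ (‖x - y‖) • (u t y - u t x) ∂(ρ₀.map (X t))

/-- The squared `L²(dρ(t) dρ(t))` fluctuation of the velocity, `|δu(t)|₂²`. -/
def fl2sq {d : ℕ} {φ : ℝ → ℝ} {κ : ℝ} (sol : EulerAlign d φ κ) (t : ℝ) : ℝ :=
  ∫ p : EuclideanSpace ℝ (Fin d) × EuclideanSpace ℝ (Fin d),
    ‖sol.u t p.1 - sol.u t p.2‖ ^ 2
    ∂((sol.ρ₀.map (sol.X t)).prod (sol.ρ₀.map (sol.X t)))

/-- `|δu(t)|₂`. -/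
def fl2 {d : ℕ} {φ : ℝ → ℝ} {κ : ℝ} (sol : EulerAlign d φ κ) (t : ℝ) : ℝ :=
  Real.sqrt (fl2sq sol t)

/-- `|δu(t)|_∞`, the sup of `|u(t,x) - u(t,y)|` over pairs in the support of `ρ(t)`. -/
def flInf {d : ℕ} {φ : ℝ → ℝ} {κ : ℝ} (sol : EulerAlign d φ κ) (t : ℝ) : ℝ :=
  sSup ((fun p : EuclideanSpace ℝ (Fin d) × EuclideanSpace ℝ (Fin d) =>
    ‖sol.u t p.1 - sol.u t p.2‖) ''
      (mSupp (sol.ρ₀.map (sol.X t)) ×ˢ mSupp (sol.ρ₀.map (sol.X t))))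

/-! ### Auxiliary lemmas -/

section Aux

variable {d : ℕ} {φ : ℝ → ℝ} {κ : ℝ}

/-- The complement of the support of a measure is null. -/
lemma mSupp_compl_null (μ : Measure (EuclideanSpace ℝ (Fin d))) :
    μ (mSupp μ)ᶜ = 0 := by
  refine measure_null_of_locally_null _ (fun x hx => ?_)
  have hx' : ¬ ∀ ε > 0, 0 < μ (Metric.ball x ε) := hx
  push_neg at hx'
  obtain ⟨ε, hε, hμ⟩ := hx'
  exact ⟨ball x ε, mem_nhdsWithin_of_mem_nhds (ball_mem_nhds x hε),
    le_antisymm hμ zero_le⟩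

lemma mSupp_nonempty (μ : Measure (EuclideanSpace ℝ (Fin d))) (hμ : μ Set.univ = 1) :
    (mSupp μ).Nonempty := by
  rw [Set.nonempty_iff_ne_empty]
  intro h
  have h0 := mSupp_compl_null μ
  rw [h, Set.compl_empty, hμ] at h0
  exact one_ne_zero h0

/-- Continuity of each trajectory in time. -/
lemma flow_contOn (sol : EulerAlign d φ κ) (x : EuclideanSpace ℝ (Fin d)) :
    ContinuousOn (fun t => sol.X t x) (Set.Ici (0:ℝ)) :=
  fun t ht => (sol.flow_deriv x t ht).continuousWithinAt

/-- The velocity field is continuous in space at nonnegative times. -/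
lemma u_cont (sol : EulerAlign d φ κ) {t : ℝ} (ht : 0 ≤ t) : Continuous (sol.u t) := by
  rw [← continuousOn_univ]
  have h : ContinuousOn (fun p : ℝ × EuclideanSpace ℝ (Fin d) => sol.u p.1 p.2)
      (Set.Ici (0:ℝ) ×ˢ Set.univ) := sol.u_smooth.continuousOn
  have hmap : Set.MapsTo (fun z : EuclideanSpace ℝ (Fin d) => ((t, z) : ℝ × _))
      Set.univ (Set.Ici (0:ℝ) ×ˢ Set.univ) := fun z _ => ⟨ht, trivial⟩
  exact h.comp ((continuous_const.prodMk continuous_id).continuousOn) hmap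

/-- The velocity field is Lipschitz in space, uniformly on compact space-time cylinders. -/
lemma u_lip (sol : EulerAlign d φ κ) {T R : ℝ} (hT : 0 < T) (hR : 0 < R) :
    ∃ L : ℝ, 0 ≤ L ∧ ∀ t ∈ Set.Icc (0:ℝ) T,
      ∀ p ∈ Metric.closedBall (0 : EuclideanSpace ℝ (Fin d)) R,
      ∀ q ∈ Metric.closedBall (0 : EuclideanSpace ℝ (Fin d)) R,
      ‖sol.u t p - sol.u t q‖ ≤ L * ‖p - q‖ := by
  set F : ℝ × EuclideanSpace ℝ (Fin d) → EuclideanSpace ℝ (Fin d) :=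
    fun p => sol.u p.1 p.2 with hF
  set s : Set (ℝ × EuclideanSpace ℝ (Fin d)) := Set.Icc 0 T ×ˢ Metric.closedBall 0 R with hs
  have hconv : Convex ℝ s := (convex_Icc _ _).prod (convex_closedBall _ _)
  have hcomp : IsCompact s := isCompact_Icc.prod (isCompact_closedBall _ _)
  have hsub : s ⊆ Set.Ici (0:ℝ) ×ˢ Set.univ :=
    Set.prod_mono Set.Icc_subset_Ici_self (Set.subset_univ _)
  have hcd : ContDiffOn ℝ 1 F s := sol.u_smooth.mono hsub
  have hint : (interior s).Nonempty := by
    rw [hs, interior_prod_eq, interior_Icc, interior_closedBall _ hR.ne']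
    exact ⟨(T/2, 0), ⟨by constructor <;> linarith, mem_ball_self hR⟩⟩
  have hu : UniqueDiffOn ℝ s := uniqueDiffOn_convex hconv hint
  have hd : DifferentiableOn ℝ F s := hcd.differentiableOn one_ne_zero
  have hcf : ContinuousOn (fun p => fderivWithin ℝ F s p) s :=
    hcd.continuousOn_fderivWithin hu le_rfl
  obtain ⟨C, hC⟩ := hcomp.exists_bound_of_continuousOn hcf
  refine ⟨max C 0, le_max_right _ _, fun t ht p hp q hq => ?_⟩
  have key := hconv.norm_image_sub_le_of_norm_hasFDerivWithin_le (C := max C 0)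
    (fun z hz => (hd z hz).hasFDerivWithinAt)
    (fun z hz => le_trans (hC z hz) (le_max_left C 0))
    (x := ((t, q) : ℝ × EuclideanSpace ℝ (Fin d)))
    (y := ((t, p) : ℝ × EuclideanSpace ℝ (Fin d))) ⟨ht, hq⟩ ⟨ht, hp⟩
  have hnorm : ‖((t,p) : ℝ × EuclideanSpace ℝ (Fin d)) - (t,q)‖ = ‖p - q‖ := by
    have h1 : ((t,p) : ℝ × EuclideanSpace ℝ (Fin d)) - (t,q) = (0, p - q) := by
      simp [Prod.ext_iff]
    rw [h1, Prod.norm_def]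
    simp
  calc ‖sol.u t p - sol.u t q‖ = ‖F (t,p) - F (t,q)‖ := rfl
    _ ≤ max C 0 * ‖((t,p) : ℝ × EuclideanSpace ℝ (Fin d)) - (t,q)‖ := key
    _ = max C 0 * ‖p - q‖ := by rw [hnorm]

/-- Local Lipschitz continuity of the flow map in the initial condition,
uniformly in time on compact intervals. -/
lemma flow_loc (sol : EulerAlign d φ κ) (x₀ : EuclideanSpace ℝ (Fin d)) {T : ℝ} (hT : 0 < T) :
    ∃ δ > 0, ∃ C > 0, ∀ y, dist y x₀ < δ → ∀ t ∈ Set.Icc (0:ℝ) T,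
      ‖sol.X t y - sol.X t x₀‖ ≤ C * dist y x₀ := by
  have hco : ContinuousOn (fun t => sol.X t x₀) (Set.Icc (0:ℝ) T) :=
    (flow_contOn sol x₀).mono Set.Icc_subset_Ici_self
  obtain ⟨M, hM⟩ := isCompact_Icc.exists_bound_of_continuousOn hco
  have hM0 : 0 ≤ M := le_trans (norm_nonneg _) (hM 0 ⟨le_rfl, hT.le⟩)
  obtain ⟨L, hL0, hLip⟩ := u_lip sol hT (R := M + 2) (by linarith)
  set δ : ℝ := (Real.exp (L * T))⁻¹ / 2 with hδdef
  have hδ : 0 < δ := by positivity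
  have hδT : δ * Real.exp (L * T) = 1/2 := by
    rw [hδdef]; field_simp
  have hbar : ∀ t ∈ Set.Icc (0:ℝ) T, δ * Real.exp (L * t) ≤ 1/2 := by
    intro t ht
    have h1 : Real.exp (L * t) ≤ Real.exp (L * T) :=
      Real.exp_le_exp.2 (mul_le_mul_of_nonneg_left ht.2 hL0)
    nlinarith
  refine ⟨δ, hδ, Real.exp (L * T), Real.exp_pos _, fun y hy => ?_⟩
  set f : ℝ → EuclideanSpace ℝ (Fin d) := fun t => sol.X t y - sol.X t x₀ with hf
  have hfc : ContinuousOn f (Set.Icc (0:ℝ) T) :=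
    ((flow_contOn sol y).mono Set.Icc_subset_Ici_self).sub hco
  have hf0 : ‖f 0‖ = dist y x₀ := by
    simp [hf, sol.flow_zero, dist_eq_norm]
  have hfd : ∀ t ∈ Set.Ico (0:ℝ) T, HasDerivWithinAt f
      (sol.u t (sol.X t y) - sol.u t (sol.X t x₀)) (Set.Ici t) t :=
    fun t ht => ((sol.flow_deriv y t ht.1).sub (sol.flow_deriv x₀ t ht.1)).mono
      (Set.Ici_subset_Ici.2 ht.1)
  -- Step 1: the trajectory of `y` stays strictly below the barrier `δ e^{Lt}`.
  have key : ∀ t ∈ Set.Icc (0:ℝ) T, ‖f t‖ < δ * Real.exp (L * t) := by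
    by_contra hbad
    push_neg at hbad
    obtain ⟨t₁, ht₁, hge⟩ := hbad
    set Bad : Set ℝ := {t | t ∈ Set.Icc (0:ℝ) T ∧ δ * Real.exp (L * t) ≤ ‖f t‖} with hBad
    have hBadne : Bad.Nonempty := ⟨t₁, ht₁, hge⟩
    have hBadbd : BddBelow Bad := ⟨0, fun t ht => ht.1.1⟩
    have hBadcl : IsClosed Bad := by
      have heq : Bad = Set.Icc (0:ℝ) T ∩
          (fun t => ‖f t‖ - δ * Real.exp (L * t)) ⁻¹' (Set.Ici 0) := by
        ext t
        simp only [hBad, Set.mem_setOf_eq, Set.mem_inter_iff, Set.mem_preimage,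
          Set.mem_Ici, sub_nonneg]
      rw [heq]
      refine ContinuousOn.preimage_isClosed_of_isClosed ?_ isClosed_Icc isClosed_Ici
      exact hfc.norm.sub ((continuous_const.mul
        (Real.continuous_exp.comp (continuous_const.mul continuous_id))).continuousOn)
    set b := sInf Bad with hb
    have hbmem : b ∈ Bad := hBadcl.csInf_mem hBadne hBadbd
    have hbI : b ∈ Set.Icc (0:ℝ) T := hbmem.1
    have hltb : ∀ t, 0 ≤ t → t < b → ‖f t‖ < δ * Real.exp (L * t) := by
      intro t ht0 htb
      by_contra hge'
      push_neg at hge'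
      exact (notMem_of_lt_csInf htb hBadbd) ⟨⟨ht0, le_trans htb.le hbI.2⟩, hge'⟩
    have hmem : ∀ t ∈ Set.Ico (0:ℝ) b,
        sol.X t y ∈ Metric.closedBall (0:EuclideanSpace ℝ (Fin d)) (M+2) ∧
        sol.X t x₀ ∈ Metric.closedBall (0:EuclideanSpace ℝ (Fin d)) (M+2) := by
      intro t ht
      have htI : t ∈ Set.Icc (0:ℝ) T := ⟨ht.1, le_trans ht.2.le hbI.2⟩
      have h1 := hltb t ht.1 ht.2
      have h2 := hbar t htI
      have hx0 : ‖sol.X t x₀‖ ≤ M := hM t htI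
      have hy' : ‖sol.X t y‖ ≤ ‖sol.X t x₀‖ + ‖f t‖ := by
        have hXy : sol.X t y = sol.X t x₀ + f t := by simp [hf]
        rw [hXy]; exact norm_add_le _ _
      constructor
      · rw [mem_closedBall_zero_iff]; linarith
      · rw [mem_closedBall_zero_iff]; linarith
    have hg := norm_le_gronwallBound_of_norm_deriv_right_le (δ := dist y x₀) (K := L) (ε := 0)
      (hfc.mono (Set.Icc_subset_Icc le_rfl hbI.2))
      (fun t ht => hfd t ⟨ht.1, lt_of_lt_of_le ht.2 hbI.2⟩)
      (le_of_eq hf0)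
      (fun t ht => by
        obtain ⟨hy1, hy2⟩ := hmem t ht
        have := hLip t ⟨ht.1, le_trans ht.2.le hbI.2⟩ _ hy1 _ hy2
        rw [add_zero]
        exact this)
      b ⟨hbI.1, le_rfl⟩
    rw [sub_zero, gronwallBound_ε0] at hg
    have hlt2 : dist y x₀ * Real.exp (L * b) < δ * Real.exp (L * b) :=
      mul_lt_mul_of_pos_right hy (Real.exp_pos _)
    have := hbmem.2
    linarith
  -- Step 2: Grönwall on the whole interval.
  have hmem : ∀ t ∈ Set.Ico (0:ℝ) T,
      sol.X t y ∈ Metric.closedBall (0:EuclideanSpace ℝ (Fin d)) (M+2) ∧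
      sol.X t x₀ ∈ Metric.closedBall (0:EuclideanSpace ℝ (Fin d)) (M+2) := by
    intro t ht
    have htI : t ∈ Set.Icc (0:ℝ) T := ⟨ht.1, ht.2.le⟩
    have h1 := key t htI
    have h2 := hbar t htI
    have hx0 : ‖sol.X t x₀‖ ≤ M := hM t htI
    have hy' : ‖sol.X t y‖ ≤ ‖sol.X t x₀‖ + ‖f t‖ := by
      have hXy : sol.X t y = sol.X t x₀ + f t := by simp [hf]
      rw [hXy]; exact norm_add_le _ _
    constructor
    · rw [mem_closedBall_zero_iff]; linarith
    · rw [mem_closedBall_zero_iff]; linarith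
  have hg := norm_le_gronwallBound_of_norm_deriv_right_le (δ := dist y x₀) (K := L) (ε := 0)
    hfc hfd (le_of_eq hf0)
    (fun t ht => by
      obtain ⟨hy1, hy2⟩ := hmem t ht
      have := hLip t ⟨ht.1, ht.2.le⟩ _ hy1 _ hy2
      rw [add_zero]
      exact this)
  intro t ht
  have := hg t ht
  rw [sub_zero, gronwallBound_ε0] at this
  calc ‖f t‖ ≤ dist y x₀ * Real.exp (L * t) := this
    _ ≤ dist y x₀ * Real.exp (L * T) := by
        have : Real.exp (L * t) ≤ Real.exp (L * T) :=
          Real.exp_le_exp.2 (mul_le_mul_of_nonneg_left ht.2 hL0)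
        exact mul_le_mul_of_nonneg_left this dist_nonneg
    _ = Real.exp (L * T) * dist y x₀ := mul_comm _ _

/-- The flow map is continuous in the initial condition at every nonnegative time. -/
lemma flow_cont_x (sol : EulerAlign d φ κ) {t : ℝ} (ht : 0 ≤ t) : Continuous (sol.X t) := by
  rw [continuous_iff_continuousAt]
  intro x₀
  obtain ⟨δ₁, hδ₁, C, hC, hA⟩ := flow_loc sol x₀ (T := t + 1) (by linarith)
  rw [Metric.continuousAt_iff]
  intro ε hε
  refine ⟨min δ₁ (ε / (2*C)), by positivity, fun {y} hy => ?_⟩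
  have h1 : dist y x₀ < δ₁ := lt_of_lt_of_le hy (min_le_left _ _)
  have h2 : dist y x₀ < ε / (2*C) := lt_of_lt_of_le hy (min_le_right _ _)
  have h3 := hA y h1 t ⟨ht, by linarith⟩
  rw [dist_eq_norm]
  calc ‖sol.X t y - sol.X t x₀‖ ≤ C * dist y x₀ := h3
    _ < C * (ε / (2*C)) := by
        rcases eq_or_lt_of_le (dist_nonneg (x := y) (y := x₀)) with h | h
        · rw [← h, mul_zero]; positivity
        · exact mul_lt_mul_of_pos_left h2 hC
    _ = ε / 2 := by field_simp
    _ < ε := by linarith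

/-- Joint continuity of the flow map on compact time intervals. -/
lemma flow_joint (sol : EulerAlign d φ κ) {T : ℝ} (hT : 0 < T) :
    ContinuousOn (fun p : ℝ × EuclideanSpace ℝ (Fin d) => sol.X p.1 p.2)
      (Set.Icc (0:ℝ) T ×ˢ Set.univ) := by
  rintro ⟨t₀, x₀⟩ ⟨ht₀, -⟩
  rw [Metric.continuousWithinAt_iff]
  intro ε hε
  obtain ⟨δ₁, hδ₁, C, hC, hA⟩ := flow_loc sol x₀ hT
  have hcw : ContinuousWithinAt (fun t => sol.X t x₀) (Set.Icc (0:ℝ) T) t₀ :=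
    ((flow_contOn sol x₀).mono Set.Icc_subset_Ici_self) t₀ ht₀
  rw [Metric.continuousWithinAt_iff] at hcw
  obtain ⟨δ₂, hδ₂, h2⟩ := hcw (ε/2) (by linarith)
  refine ⟨min δ₂ (min δ₁ (ε/(2*(C+1)))), by positivity, ?_⟩
  rintro ⟨t, y⟩ ⟨htI, -⟩ hdist
  rw [Prod.dist_eq] at hdist
  have hdt : dist t t₀ < δ₂ :=
    lt_of_le_of_lt (le_max_left _ _) (lt_of_lt_of_le hdist (min_le_left _ _))
  have hdy₁ : dist y x₀ < δ₁ :=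
    lt_of_le_of_lt (le_max_right _ _)
      (lt_of_lt_of_le hdist (le_trans (min_le_right _ _) (min_le_left _ _)))
  have hdy₂ : dist y x₀ < ε/(2*(C+1)) :=
    lt_of_le_of_lt (le_max_right _ _)
      (lt_of_lt_of_le hdist (le_trans (min_le_right _ _) (min_le_right _ _)))
  have hstep1 : dist (sol.X t y) (sol.X t x₀) < ε/2 := by
    rw [dist_eq_norm]
    calc ‖sol.X t y - sol.X t x₀‖ ≤ C * dist y x₀ := hA y hdy₁ t htI
      _ ≤ (C+1) * dist y x₀ := by nlinarith [dist_nonneg (x := y) (y := x₀)]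
      _ < (C+1) * (ε/(2*(C+1))) := mul_lt_mul_of_pos_left hdy₂ (by linarith)
      _ = ε/2 := by
          have h : C + 1 ≠ 0 := by positivity
          field_simp
  have hstep2 : dist (sol.X t x₀) (sol.X t₀ x₀) < ε/2 := h2 htI hdt
  calc dist (sol.X t y) (sol.X t₀ x₀)
      ≤ dist (sol.X t y) (sol.X t x₀) + dist (sol.X t x₀) (sol.X t₀ x₀) := dist_triangle _ _ _
    _ < ε/2 + ε/2 := by linarith
    _ = ε := by ring

/-- Uniform (in the initial point, over the support) continuity of the flow in time. -/
lemma flow_unif (sol : EulerAlign d φ κ) {T : ℝ} (hT : 0 < T) :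
    ∀ ε > 0, ∃ δ > 0, ∀ s ∈ Set.Icc (0:ℝ) T, ∀ t ∈ Set.Icc (0:ℝ) T, dist s t < δ →
      ∀ x ∈ mSupp sol.ρ₀, dist (sol.X s x) (sol.X t x) < ε := by
  have hK : IsCompact ((Set.Icc (0:ℝ) T) ×ˢ mSupp sol.ρ₀) := isCompact_Icc.prod sol.cpt
  have hc : ContinuousOn (fun p : ℝ × EuclideanSpace ℝ (Fin d) => sol.X p.1 p.2)
      ((Set.Icc (0:ℝ) T) ×ˢ mSupp sol.ρ₀) :=
    (flow_joint sol hT).mono (Set.prod_mono subset_rfl (Set.subset_univ _))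
  have huc := hK.uniformContinuousOn_of_continuous hc
  rw [Metric.uniformContinuousOn_iff] at huc
  intro ε hε
  obtain ⟨δ, hδ, H⟩ := huc ε hε
  refine ⟨δ, hδ, fun s hs t ht hst x hx => ?_⟩
  have hdd : dist ((s, x) : ℝ × EuclideanSpace ℝ (Fin d)) ((t, x)) < δ := by
    rw [Prod.dist_eq]
    simp only [dist_self]
    rw [max_eq_left dist_nonneg]
    exact hst
  exact H (s, x) ⟨hs, hx⟩ (t, x) ⟨ht, hx⟩ hdd

/-- Points in the support of `ρ₀` are carried into the support of the pushforward. -/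
lemma mem_mSupp_map (sol : EulerAlign d φ κ) {t : ℝ} (ht : 0 ≤ t)
    {x : EuclideanSpace ℝ (Fin d)} (hx : x ∈ mSupp sol.ρ₀) :
    sol.X t x ∈ mSupp (sol.ρ₀.map (sol.X t)) := by
  intro ε hε
  rw [Measure.map_apply (flow_cont_x sol ht).measurable measurableSet_ball]
  have hc := (flow_cont_x sol ht).continuousAt (x := x)
  rw [Metric.continuousAt_iff] at hc
  obtain ⟨δ, hδ, h⟩ := hc ε hε
  calc (0:ℝ≥0∞) < sol.ρ₀ (Metric.ball x δ) := hx δ hδ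
    _ ≤ sol.ρ₀ (sol.X t ⁻¹' Metric.ball (sol.X t x) ε) := by
        apply measure_mono
        intro y hy
        exact h hy

/-- The support of the pushforward is contained in the image of the support. -/
lemma mSupp_map_subset (sol : EulerAlign d φ κ) {t : ℝ} (ht : 0 ≤ t) :
    mSupp (sol.ρ₀.map (sol.X t)) ⊆ sol.X t '' (mSupp sol.ρ₀) := by
  intro z hz
  by_contra hne
  have hK : IsCompact (sol.X t '' mSupp sol.ρ₀) := sol.cpt.image (flow_cont_x sol ht)
  have hop : IsOpen (sol.X t '' mSupp sol.ρ₀)ᶜ := hK.isClosed.isOpen_compl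
  rw [Metric.isOpen_iff] at hop
  obtain ⟨ε, hε, hball⟩ := hop z hne
  have h0 := hz ε hε
  rw [Measure.map_apply (flow_cont_x sol ht).measurable measurableSet_ball] at h0
  have hsub : sol.X t ⁻¹' Metric.ball z ε ⊆ (mSupp sol.ρ₀)ᶜ := by
    intro y hy hymem
    exact (hball hy) (Set.mem_image_of_mem _ hymem)
  have hle : sol.ρ₀ (sol.X t ⁻¹' Metric.ball z ε) ≤ sol.ρ₀ (mSupp sol.ρ₀)ᶜ :=
    measure_mono hsub
  rw [mSupp_compl_null] at hle
  exact absurd (le_antisymm hle zero_le) h0.ne'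

/-- Velocity fluctuations along the flow are bounded by `flInf`. -/
lemma fluct_le_flInf (sol : EulerAlign d φ κ) {t : ℝ} (ht : 0 ≤ t)
    {x y : EuclideanSpace ℝ (Fin d)} (hx : x ∈ mSupp sol.ρ₀) (hy : y ∈ mSupp sol.ρ₀) :
    ‖sol.u t (sol.X t x) - sol.u t (sol.X t y)‖ ≤ flInf sol t := by
  have hcont : Continuous fun p : EuclideanSpace ℝ (Fin d) × EuclideanSpace ℝ (Fin d) =>
      ‖sol.u t p.1 - sol.u t p.2‖ :=
    (((u_cont sol ht).comp continuous_fst).sub ((u_cont sol ht).comp continuous_snd)).norm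
  have hKt : IsCompact (sol.X t '' mSupp sol.ρ₀) := sol.cpt.image (flow_cont_x sol ht)
  have hbdd : BddAbove ((fun p : EuclideanSpace ℝ (Fin d) × EuclideanSpace ℝ (Fin d) =>
      ‖sol.u t p.1 - sol.u t p.2‖) ''
      ((sol.X t '' mSupp sol.ρ₀) ×ˢ (sol.X t '' mSupp sol.ρ₀))) :=
    ((hKt.prod hKt).image hcont).bddAbove
  refine le_csSup (BddAbove.mono (Set.image_mono
    (Set.prod_mono (mSupp_map_subset sol ht) (mSupp_map_subset sol ht))) hbdd) ?_
  exact ⟨(sol.X t x, sol.X t y), ⟨mem_mSupp_map sol ht hx, mem_mSupp_map sol ht hy⟩, rfl⟩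

lemma flInf0_nonneg (sol : EulerAlign d φ κ) : 0 ≤ flInf sol 0 := by
  obtain ⟨x₀, hx₀⟩ := mSupp_nonempty sol.ρ₀ (by haveI := sol.prob; exact measure_univ)
  have h := fluct_le_flInf sol le_rfl hx₀ hx₀
  simpa using h

/-- The main quantitative estimate: while the connectivity property holds on `[0,T]`,
flow fluctuations of pairs at initial distance `≤ r` stay `≤ 3r` with a quantitative
margin. -/
lemma main_estimate {r m η : ℝ} (sol : EulerAlign d φ κ)
    (hκ : 0 < κ) (hr : 0 < r) (hm : 0 < m) (hη : 0 < η)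
    (hbound : ∀ T ≥ (0:ℝ),
      (∀ s ∈ Set.Icc (0:ℝ) T, ∀ x ∈ mSupp sol.ρ₀, ∀ y ∈ mSupp sol.ρ₀,
        ‖x - y‖ ≤ r → ‖sol.X s x - sol.X s y‖ ≤ 3 * r) →
      ∀ t ∈ Set.Icc (0:ℝ) T,
        flInf sol t ≤ flInf sol 0 * Real.exp (-(κ * m * t)) +
          (2 / m) * fl2 sol 0 * Real.exp (-(κ * η * t)))
    (hκ0 : (1 / (r * m)) * ((1 / 2) * flInf sol 0 + η⁻¹ * fl2 sol 0) ≤ κ)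
    {T : ℝ} (hT : 0 ≤ T)
    (hP : ∀ s ∈ Set.Icc (0:ℝ) T, ∀ x ∈ mSupp sol.ρ₀, ∀ y ∈ mSupp sol.ρ₀,
        ‖x - y‖ ≤ r → ‖sol.X s x - sol.X s y‖ ≤ 3 * r) :
    ∀ t ∈ Set.Icc (0:ℝ) T, ∀ x ∈ mSupp sol.ρ₀, ∀ y ∈ mSupp sol.ρ₀, ‖x - y‖ ≤ r →
      ‖sol.X t x - sol.X t y‖ ≤ 3 * r - 2 * r * Real.exp (-(κ * max m η * T)) := by
  have ha : 0 ≤ flInf sol 0 := flInf0_nonneg sol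
  have hb : 0 ≤ fl2 sol 0 := Real.sqrt_nonneg _
  have hBD := hbound T hT hP
  intro t ht x hx y hy hxy
  set a : ℝ := flInf sol 0 with haa
  set b : ℝ := fl2 sol 0 with hbb
  set A₁ : ℝ := a/(κ*m) with hA₁
  set A₂ : ℝ := 2*b/(m*κ*η) with hA₂
  have hA₁0 : 0 ≤ A₁ := by positivity
  have hA₂0 : 0 ≤ A₂ := by positivity
  set B : ℝ → ℝ := fun s => ‖x - y‖ + A₁*(1 - Real.exp (-(κ*m*s)))
      + A₂*(1 - Real.exp (-(κ*η*s))) with hBdef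
  have hB : ∀ s, HasDerivAt B
      (a * Real.exp (-(κ*m*s)) + 2/m * b * Real.exp (-(κ*η*s))) s := by
    intro s
    have e1 : HasDerivAt (fun s : ℝ => 1 - Real.exp (-(κ*m*s)))
        (κ*m*Real.exp (-(κ*m*s))) s := by
      have h1 : HasDerivAt (fun s : ℝ => -(κ*m*s)) (-(κ*m)) s := by
        exact (((hasDerivAt_id s).const_mul (κ*m)).neg).congr_deriv (by ring)
      have h2 := h1.exp
      have h3 := (hasDerivAt_const s (1:ℝ)).sub h2
      exact h3.congr_deriv (by ring)
    have e2 : HasDerivAt (fun s : ℝ => 1 - Real.exp (-(κ*η*s)))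
        (κ*η*Real.exp (-(κ*η*s))) s := by
      have h1 : HasDerivAt (fun s : ℝ => -(κ*η*s)) (-(κ*η)) s := by
        exact (((hasDerivAt_id s).const_mul (κ*η)).neg).congr_deriv (by ring)
      have h2 := h1.exp
      have h3 := (hasDerivAt_const s (1:ℝ)).sub h2
      exact h3.congr_deriv (by ring)
    have h := ((hasDerivAt_const s ‖x - y‖).add (e1.const_mul A₁)).add (e2.const_mul A₂)
    rw [hBdef]
    exact h.congr_deriv (by rw [hA₁, hA₂]; field_simp; ring)
  have hfc : ContinuousOn (fun s => sol.X s x - sol.X s y) (Set.Icc (0:ℝ) t) :=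
    ((flow_contOn sol x).mono (Set.Icc_subset_Ici_self)).sub
      ((flow_contOn sol y).mono (Set.Icc_subset_Ici_self))
  have hfd : ∀ s ∈ Set.Ico (0:ℝ) t, HasDerivWithinAt (fun s => sol.X s x - sol.X s y)
      (sol.u s (sol.X s x) - sol.u s (sol.X s y)) (Set.Ici s) s :=
    fun s hs => ((sol.flow_deriv x s hs.1).sub (sol.flow_deriv y s hs.1)).mono
      (Set.Ici_subset_Ici.2 hs.1)
  have hstart : ‖sol.X 0 x - sol.X 0 y‖ ≤ B 0 := by
    rw [sol.flow_zero, sol.flow_zero, hBdef]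
    simp
  have hbnd : ∀ s ∈ Set.Ico (0:ℝ) t,
      ‖sol.u s (sol.X s x) - sol.u s (sol.X s y)‖ ≤
        a * Real.exp (-(κ*m*s)) + 2/m * b * Real.exp (-(κ*η*s)) := by
    intro s hs
    refine le_trans (fluct_le_flInf sol hs.1 hx hy) ?_
    have := hBD s ⟨hs.1, le_trans hs.2.le ht.2⟩
    calc flInf sol s ≤ flInf sol 0 * Real.exp (-(κ * m * s)) +
          (2 / m) * fl2 sol 0 * Real.exp (-(κ * η * s)) := this
      _ = a * Real.exp (-(κ*m*s)) + 2/m * b * Real.exp (-(κ*η*s)) := by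
          rw [haa, hbb]
  have fence := image_norm_le_of_norm_deriv_right_le_deriv_boundary
    hfc hfd hstart hB hbnd
  have hfin : ‖sol.X t x - sol.X t y‖ ≤ B t := fence ⟨ht.1, le_rfl⟩
  -- Now bound `B t`.
  have hmax : 0 < max m η := lt_of_lt_of_le hm (le_max_left _ _)
  have hΓ0 : 0 < κ * max m η := mul_pos hκ hmax
  have hE1 : Real.exp (-(κ * max m η * T)) ≤ Real.exp (-(κ*m*t)) := by
    apply Real.exp_le_exp.2
    have h1 : κ*m ≤ κ * max m η := mul_le_mul_of_nonneg_left (le_max_left _ _) hκ.le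
    have h2 : κ*m*t ≤ κ * max m η * t := mul_le_mul_of_nonneg_right h1 ht.1
    have h3 : κ * max m η * t ≤ κ * max m η * T := mul_le_mul_of_nonneg_left ht.2 hΓ0.le
    linarith
  have hE2 : Real.exp (-(κ * max m η * T)) ≤ Real.exp (-(κ*η*t)) := by
    apply Real.exp_le_exp.2
    have h1 : κ*η ≤ κ * max m η := mul_le_mul_of_nonneg_left (le_max_right _ _) hκ.le
    have h2 : κ*η*t ≤ κ * max m η * t := mul_le_mul_of_nonneg_right h1 ht.1
    have h3 : κ * max m η * t ≤ κ * max m η * T := mul_le_mul_of_nonneg_left ht.2 hΓ0.le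
    linarith
  have hsum : A₁ + A₂ ≤ 2*r := by
    have h0 : 1/2*a + η⁻¹*b ≤ κ*(r*m) := by
      have hrm : (0:ℝ) < r*m := by positivity
      have h1 : (r*m) * ((1 / (r * m)) * ((1 / 2) * a + η⁻¹ * b)) ≤ (r*m) * κ :=
        mul_le_mul_of_nonneg_left hκ0 hrm.le
      have h2 : (r*m) * ((1 / (r * m)) * ((1 / 2) * a + η⁻¹ * b))
          = 1/2*a + η⁻¹*b := by field_simp
      rw [h2] at h1
      linarith [h1]
    have heq : A₁ + A₂ = (2/(κ*m)) * (1/2*a + η⁻¹*b) := by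
      rw [hA₁, hA₂]; field_simp
    rw [heq]
    calc (2/(κ*m)) * (1/2*a + η⁻¹*b) ≤ (2/(κ*m)) * (κ*(r*m)) :=
          mul_le_mul_of_nonneg_left h0 (by positivity)
      _ = 2*r := by field_simp
  have hexple : Real.exp (-(κ * max m η * T)) ≤ 1 := by
    rw [Real.exp_le_one_iff]
    nlinarith
  have h1 : A₁ * (1 - Real.exp (-(κ*m*t))) ≤ A₁ * (1 - Real.exp (-(κ * max m η * T))) :=
    mul_le_mul_of_nonneg_left (by linarith) hA₁0
  have h2 : A₂ * (1 - Real.exp (-(κ*η*t))) ≤ A₂ * (1 - Real.exp (-(κ * max m η * T))) :=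
    mul_le_mul_of_nonneg_left (by linarith) hA₂0
  have hBt : B t ≤ 3*r - 2*r*Real.exp (-(κ * max m η * T)) := by
    have hfactor : (A₁+A₂)*(1 - Real.exp (-(κ * max m η * T)))
        ≤ 2*r*(1 - Real.exp (-(κ * max m η * T))) :=
      mul_le_mul_of_nonneg_right hsum (by linarith)
    calc B t = ‖x - y‖ + A₁*(1 - Real.exp (-(κ*m*t))) + A₂*(1 - Real.exp (-(κ*η*t))) := by
          rw [hBdef]
      _ ≤ ‖x - y‖ + A₁*(1 - Real.exp (-(κ * max m η * T)))
          + A₂*(1 - Real.exp (-(κ * max m η * T))) := by linarith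
      _ = ‖x - y‖ + (A₁+A₂)*(1 - Real.exp (-(κ * max m η * T))) := by ring
      _ ≤ r + 2*r*(1 - Real.exp (-(κ * max m η * T))) := by linarith
      _ = 3*r - 2*r*Real.exp (-(κ * max m η * T)) := by ring
  linarith

end Aux

/-- **Persistence of chain connectivity for large coupling** (Proposition 4.3).
Let `(ρ,u)` be a global strong solution of the pressureless Euler alignment system
satisfying the connectivity assumption, and let `η > 0` be such that the uniform
fluctuation bound `|δu(t)|_∞ ≤ |δu(0)|_∞ e^{−κmt} + (2/m)|δu(0)|₂ e^{−κηt}` holds up to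
any connectivity time (i.e. on every interval `[0,T]` on which flow fluctuations at
initial scale `r` stay below `3r`).  If `κ ≥ κ₀ := (1/(rm))·(½|δu(0)|_∞ + η⁻¹|δu(0)|₂)`,
then connectivity persists for all time: `|X(t,x) − X(t,y)| ≤ 3r` for all `t ≥ 0` and all
`x, y ∈ supp ρ₀` with `|x − y| ≤ r`. -/
theorem connectivity_persists
    (d : ℕ) (φ : ℝ → ℝ) (κ r m η : ℝ) (n : ℕ) (sol : EulerAlign d φ κ)
    (hκ : 0 < κ) (hr : 0 < r) (hm : 0 < m) (hη : 0 < η)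
    (hφ0 : ∀ h, 0 ≤ φ h)
    (hφ : ∀ h, 0 < h → h ≤ 6 * r → 1 ≤ φ h)
    (hchain : ChainConnectedN (mSupp sol.ρ₀) r n)
    (hmass : ∀ c ∈ mSupp sol.ρ₀, m ≤ (sol.ρ₀ (Metric.closedBall c (r / 100))).toReal)
    (hbound : ∀ T ≥ (0:ℝ),
      (∀ s ∈ Set.Icc (0:ℝ) T, ∀ x ∈ mSupp sol.ρ₀, ∀ y ∈ mSupp sol.ρ₀,
        ‖x - y‖ ≤ r → ‖sol.X s x - sol.X s y‖ ≤ 3 * r) →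
      ∀ t ∈ Set.Icc (0:ℝ) T,
        flInf sol t ≤ flInf sol 0 * Real.exp (-(κ * m * t)) +
          (2 / m) * fl2 sol 0 * Real.exp (-(κ * η * t)))
    (hκ0 : (1 / (r * m)) * ((1 / 2) * flInf sol 0 + η⁻¹ * fl2 sol 0) ≤ κ) :
    ∀ t ≥ (0:ℝ), ∀ x ∈ mSupp sol.ρ₀, ∀ y ∈ mSupp sol.ρ₀,
      ‖x - y‖ ≤ r → ‖sol.X t x - sol.X t y‖ ≤ 3 * r := by
  -- the connectivity property up to time `T`
  set P : ℝ → Prop := fun T => ∀ s ∈ Set.Icc (0:ℝ) T, ∀ x ∈ mSupp sol.ρ₀,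
    ∀ y ∈ mSupp sol.ρ₀, ‖x - y‖ ≤ r → ‖sol.X s x - sol.X s y‖ ≤ 3 * r with hPdef
  have hP0 : P 0 := by
    intro s hs x hx y hy hxy
    have hs0 : s = 0 := le_antisymm hs.2 hs.1
    rw [hs0, sol.flow_zero, sol.flow_zero]
    linarith
  have hmono : ∀ T₁ T₂ : ℝ, T₁ ≤ T₂ → P T₂ → P T₁ := by
    intro T₁ T₂ h12 hP s hs
    exact hP s ⟨hs.1, le_trans hs.2 h12⟩
  suffices hAll : ∀ T, 0 ≤ T → P T by
    intro t ht x hx y hy hxy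
    exact hAll t ht t ⟨ht, le_rfl⟩ x hx y hy hxy
  by_contra hbad
  push_neg at hbad
  obtain ⟨T₀, hT₀0, hT₀⟩ := hbad
  set Bad : Set ℝ := {T | 0 ≤ T ∧ ¬ P T} with hBadDef
  have hBne : Bad.Nonempty := ⟨T₀, hT₀0, hT₀⟩
  have hBbd : BddBelow Bad := ⟨0, fun T hT => hT.1⟩
  set c := sInf Bad with hcDef
  have hc0 : 0 ≤ c := le_csInf hBne (fun T hT => hT.1)
  have hlt : ∀ T, 0 ≤ T → T < c → P T := by
    intro T h0 hTc
    by_contra h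
    exact absurd (csInf_le hBbd ⟨h0, h⟩) (not_le.2 hTc)
  have hPc : P c := by
    intro s hs x hx y hy hxy
    rcases lt_or_eq_of_le hs.2 with hsc | hsc
    · have hmid : P ((s+c)/2) := hlt _ (by linarith [hs.1]) (by linarith)
      exact hmid s ⟨hs.1, by linarith⟩ x hx y hy hxy
    · rcases eq_or_lt_of_le hc0 with hc | hc
      · -- c = 0
        have hs0 : s = 0 := by rw [hsc, ← hc]
        exact hP0 s (by rw [hs0]; exact ⟨le_rfl, le_rfl⟩) x hx y hy hxy
      · -- 0 < c, take the limit from the left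
        have hcont : ContinuousWithinAt (fun t => ‖sol.X t x - sol.X t y‖)
            (Set.Icc (0:ℝ) c) c := by
          apply ContinuousWithinAt.norm
          exact (((flow_contOn sol x).mono Set.Icc_subset_Ici_self).sub
            ((flow_contOn sol y).mono Set.Icc_subset_Ici_self)) c ⟨hc0, le_rfl⟩
        have hne : (𝓝[Set.Ico (0:ℝ) c] c).NeBot := by
          rw [← mem_closure_iff_nhdsWithin_neBot, closure_Ico hc.ne]
          exact ⟨hc0, le_rfl⟩
        have htd : Tendsto (fun t => ‖sol.X t x - sol.X t y‖) (𝓝[Set.Ico (0:ℝ) c] c)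
            (𝓝 ‖sol.X c x - sol.X c y‖) :=
          (hcont.tendsto).mono_left (nhdsWithin_mono c Set.Ico_subset_Icc_self)
        rw [hsc]
        refine le_of_tendsto htd ?_
        filter_upwards [self_mem_nhdsWithin] with t ht
        have hmid : P ((t+c)/2) := hlt _ (by linarith [ht.1, ht.2]) (by linarith [ht.2])
        exact hmid t ⟨ht.1, by linarith [ht.2]⟩ x hx y hy hxy
  -- quantitative margin at time `c`
  set ε : ℝ := 2 * r * Real.exp (-(κ * max m η * c)) with hεdef
  have hε : 0 < ε := by positivity
  have hmar := main_estimate sol hκ hr hm hη hbound hκ0 hc0 hPc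
  -- uniform continuity of the flow on `[0, c+1] × supp ρ₀`
  obtain ⟨δ, hδ, hUC⟩ := flow_unif sol (T := c + 1) (by linarith) (ε/2) (by positivity)
  set δ' : ℝ := min δ 1 with hδ'def
  have hδ' : 0 < δ' := lt_min hδ one_pos
  have hPext : P (c + δ'/2) := by
    intro s hs x hx y hy hxy
    rcases le_or_gt s c with h | h
    · have := hmar s ⟨hs.1, h⟩ x hx y hy hxy
      linarith
    · have hδ'1 : δ' ≤ 1 := min_le_right _ _
      have hδ'δ : δ' ≤ δ := min_le_left _ _
      have hsc : dist s c < δ := by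
        rw [Real.dist_eq, abs_of_pos (by linarith)]
        linarith [hs.2]
      have hsI : s ∈ Set.Icc (0:ℝ) (c+1) := ⟨hs.1, by linarith [hs.2]⟩
      have hcI : c ∈ Set.Icc (0:ℝ) (c+1) := ⟨hc0, by linarith⟩
      have h1 := hUC s hsI c hcI hsc x hx
      have h2 := hUC s hsI c hcI hsc y hy
      have h3 := hmar c ⟨hc0, le_rfl⟩ x hx y hy hxy
      have hsplit : sol.X s x - sol.X s y = (sol.X s x - sol.X c x)
          + (sol.X c x - sol.X c y) + (sol.X c y - sol.X s y) := by abel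
      rw [hsplit]
      have htri := norm_add₃_le (a := sol.X s x - sol.X c x) (b := sol.X c x - sol.X c y)
        (c := sol.X c y - sol.X s y)
      have hn1 : ‖sol.X s x - sol.X c x‖ < ε/2 := by
        rw [← dist_eq_norm]; exact h1
      have hn2 : ‖sol.X c y - sol.X s y‖ < ε/2 := by
        rw [← dist_eq_norm, dist_comm]; exact h2
      linarith
  have hlb : ∀ T ∈ Bad, c + δ'/2 ≤ T := by
    intro T hT
    by_contra hTlt
    push_neg at hTlt
    exact hT.2 (hmono T (c + δ'/2) hTlt.le hPext)
  have hcontra := le_csInf hBne hlb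
  rw [← hcDef] at hcontra
  linarith
end
end

section
/- Discrete enstrophy differential inequality: For any solution of the Cucker–Smale system, for every t ≥ 0, d/dt |δv(t)|₂² ≤ −κ·(inf{φ(h) : 0 ≤ h ≤ D(t)})·|δv(t)|₂², where D(t) := max_{i,j} |x_i(t) − x_j(t)| is the diameter of the positions. -/
open MeasureTheory Metric Set Filter

noncomputable section

/-- A solution of the Cucker–Smale system for `N` agents in `ℝ^d`, with communication
kernel `φ` and coupling strength `κ`:  `ẋᵢ = vᵢ` and
`v̇ᵢ = (κ/N) ∑ⱼ φ(|xᵢ - xⱼ|)(vⱼ - vᵢ)` on `[0,∞)`. -/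
structure CSSys (d N : ℕ) (φ : ℝ → ℝ) (κ : ℝ) where
  x : ℝ → Fin N → EuclideanSpace ℝ (Fin d)
  v : ℝ → Fin N → EuclideanSpace ℝ (Fin d)
  hx : ∀ i, ∀ t ∈ Set.Ici (0:ℝ),
      HasDerivWithinAt (fun s => x s i) (v t i) (Set.Ici (0:ℝ)) t
  hv : ∀ i, ∀ t ∈ Set.Ici (0:ℝ),
      HasDerivWithinAt (fun s => v s i)
        ((κ / (N:ℝ)) • ∑ j, φ (‖x t i - x t j‖) • (v t j - v t i)) (Set.Ici (0:ℝ)) t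

/-- `|δv(t)|₂ = ((1/N²) ∑_{i,j} |vᵢ(t) - vⱼ(t)|²)^{1/2}`. -/
def dv2 {d N : ℕ} {φ : ℝ → ℝ} {κ : ℝ} (S : CSSys d N φ κ) (t : ℝ) : ℝ :=
  Real.sqrt (((N:ℝ) ^ 2)⁻¹ * ∑ i, ∑ j, ‖S.v t i - S.v t j‖ ^ 2)

/-- `|δv(t)|_∞ = max_{i,j} |vᵢ(t) - vⱼ(t)|`. -/
def dvInf {d N : ℕ} {φ : ℝ → ℝ} {κ : ℝ} (S : CSSys d N φ κ) (t : ℝ) : ℝ :=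
  ⨆ p : Fin N × Fin N, ‖S.v t p.1 - S.v t p.2‖

/-- A set of points is chain connected at scale `r`: every pair of its points is connected
by a finite chain of closed balls of radius `r` centered at points of the set, consecutive
balls intersecting, the first point in the first ball and the second point in the last. -/
def ChainConn {d : ℕ} (S : Set (EuclideanSpace ℝ (Fin d))) (r : ℝ) : Prop :=
  ∀ x ∈ S, ∀ y ∈ S, ∃ k : ℕ, 1 ≤ k ∧ ∃ c : ℕ → EuclideanSpace ℝ (Fin d),
    (∀ i < k, c i ∈ S) ∧
    (∀ i, i + 1 < k →
      (Metric.closedBall (c i) r ∩ Metric.closedBall (c (i + 1)) r).Nonempty) ∧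
    x ∈ Metric.closedBall (c 0) r ∧ y ∈ Metric.closedBall (c (k - 1)) r


open Finset

section Aux
variable {E : Type*} [NormedAddCommGroup E] [InnerProductSpace ℝ E]

local notation "⟪" x ", " y "⟫" => @inner ℝ _ _ x y

lemma cs_sum_zero {N : ℕ} (w : Fin N → E) (p : Fin N → Fin N → ℝ)
    (psymm : ∀ i j, p i j = p j i) :
    ∑ i, ∑ k, p i k • (w k - w i) = (0 : E) := by
  set X : E := ∑ i, ∑ k, p i k • (w k - w i) with hX
  have h1 : X = -X := by
    calc X = ∑ k, ∑ i, p i k • (w k - w i) := Finset.sum_comm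
      _ = ∑ i, ∑ k, -(p i k • (w k - w i)) := by
          refine Finset.sum_congr rfl fun i _ => Finset.sum_congr rfl fun k _ => ?_
          rw [psymm k i, show (w i - w k) = -(w k - w i) from (neg_sub _ _).symm, smul_neg]
      _ = -X := by simp [hX]
  have h2 : (2:ℝ) • X = 0 := by
    rw [two_smul]; nth_rewrite 2 [h1]; simp
  have := smul_eq_zero.mp h2
  simpa using this

lemma cs_inner_pair {N : ℕ} (w : Fin N → E) (p : Fin N → Fin N → ℝ)
    (psymm : ∀ i j, p i j = p j i) :
    (2:ℝ) * ∑ i, ∑ k, p i k * ⟪w i, w k - w i⟫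
      = -∑ i, ∑ k, p i k * ‖w i - w k‖ ^ 2 := by
  have hterm : ∀ i k : Fin N, (⟪w i, w k - w i⟫ : ℝ) + ⟪w k, w i - w k⟫
      = -‖w i - w k‖ ^ 2 := by
    intro i k
    have h := norm_sub_sq_real (w i) (w k)
    simp only [inner_sub_right, real_inner_self_eq_norm_sq, real_inner_comm (w k) (w i)] at *
    linarith
  have hswap : ∑ i, ∑ k, p i k * ⟪w i, w k - w i⟫
      = ∑ i, ∑ k, p i k * ⟪w k, w i - w k⟫ := by
    calc ∑ i, ∑ k, p i k * ⟪w i, w k - w i⟫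
        = ∑ k, ∑ i, p i k * ⟪w i, w k - w i⟫ := Finset.sum_comm
      _ = ∑ i, ∑ k, p i k * ⟪w k, w i - w k⟫ := by
          refine Finset.sum_congr rfl fun i _ => Finset.sum_congr rfl fun k _ => ?_
          rw [psymm k i]
  calc (2:ℝ) * ∑ i, ∑ k, p i k * ⟪w i, w k - w i⟫
      = (∑ i, ∑ k, p i k * ⟪w i, w k - w i⟫)
        + ∑ i, ∑ k, p i k * ⟪w k, w i - w k⟫ := by rw [← hswap]; ring
    _ = ∑ i, ∑ k, p i k * ((⟪w i, w k - w i⟫ : ℝ) + ⟪w k, w i - w k⟫) := by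
        rw [← Finset.sum_add_distrib]
        refine Finset.sum_congr rfl fun i _ => ?_
        rw [← Finset.sum_add_distrib]
        exact Finset.sum_congr rfl fun k _ => by ring
    _ = -∑ i, ∑ k, p i k * ‖w i - w k‖ ^ 2 := by
        rw [← Finset.sum_neg_distrib]
        refine Finset.sum_congr rfl fun i _ => ?_
        rw [← Finset.sum_neg_distrib]
        refine Finset.sum_congr rfl fun k _ => ?_
        rw [hterm i k]; ring

lemma cs_key {N : ℕ} (w : Fin N → E) (p : Fin N → Fin N → ℝ) (c : ℝ)
    (psymm : ∀ i j, p i j = p j i) :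
    (∑ i, ∑ j, (⟪w i - w j,
        (c • ∑ k, p i k • (w k - w i)) - c • ∑ k, p j k • (w k - w j)⟫ : ℝ))
      = -(c * N) * ∑ i, ∑ j, p i j * ‖w i - w j‖ ^ 2 := by
  set a : Fin N → E := fun i => c • ∑ k, p i k • (w k - w i) with ha
  have ha0 : ∑ i, a i = 0 := by
    simp only [ha, ← Finset.smul_sum, cs_sum_zero w p psymm, smul_zero]
  have hwa : ∑ i, (⟪w i, a i⟫ : ℝ) = c * ∑ i, ∑ k, p i k * ⟪w i, w k - w i⟫ := by
    rw [Finset.mul_sum]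
    refine Finset.sum_congr rfl fun i _ => ?_
    rw [ha]
    simp only [inner_smul_right, inner_sum, real_inner_smul_right]
  have hT : (∑ i, ∑ j, (⟪w i - w j, a i - a j⟫ : ℝ))
      = 2 * N * ∑ i, (⟪w i, a i⟫ : ℝ) := by
    have expand : ∀ i j : Fin N, (⟪w i - w j, a i - a j⟫ : ℝ)
        = ⟪w i, a i⟫ - ⟪w j, a i⟫ - ⟪w i, a j⟫ + ⟪w j, a j⟫ := by
      intro i j
      simp only [inner_sub_left, inner_sub_right]; ring
    have hA : ∑ i : Fin N, ∑ j : Fin N, (⟪w j, a i⟫ : ℝ) = 0 := by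
      have h : ∑ i : Fin N, ∑ j : Fin N, (⟪w j, a i⟫ : ℝ) = ⟪∑ j, w j, ∑ i, a i⟫ := by
        rw [inner_sum]
        exact Finset.sum_congr rfl fun i _ => (sum_inner _ _ _).symm
      rw [h, ha0, inner_zero_right]
    have hB : ∑ i : Fin N, ∑ j : Fin N, (⟪w i, a j⟫ : ℝ) = 0 := by
      have h : ∑ i : Fin N, ∑ j : Fin N, (⟪w i, a j⟫ : ℝ) = ⟪∑ i, w i, ∑ j, a j⟫ := by
        rw [sum_inner]
        exact Finset.sum_congr rfl fun i _ => (inner_sum _ _ _).symm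
      rw [h, ha0, inner_zero_right]
    have hC : ∑ _i : Fin N, ∑ _j : Fin N, (0:ℝ) = 0 := by simp
    have hD : ∑ i : Fin N, (∑ _j : Fin N, (⟪w i, a i⟫ : ℝ)) = N * ∑ i, (⟪w i, a i⟫:ℝ) := by
      rw [Finset.mul_sum]
      exact Finset.sum_congr rfl fun i _ => by
        simp [Finset.sum_const, Finset.card_univ, nsmul_eq_mul]
    have hE : ∑ i : Fin N, ∑ j : Fin N, (⟪w j, a j⟫ : ℝ) = N * ∑ i, (⟪w i, a i⟫:ℝ) := by
      rw [Finset.sum_comm, Finset.mul_sum]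
      exact Finset.sum_congr rfl fun i _ => by
        simp [Finset.sum_const, Finset.card_univ, nsmul_eq_mul]
    simp only [expand, Finset.sum_add_distrib, Finset.sum_sub_distrib]
    rw [hA, hB, hD, hE]
    ring
  have h2 := cs_inner_pair w p psymm
  calc (∑ i, ∑ j, (⟪w i - w j, a i - a j⟫ : ℝ))
      = 2 * N * ∑ i, (⟪w i, a i⟫ : ℝ) := hT
    _ = (c * N) * ((2:ℝ) * ∑ i, ∑ k, p i k * ⟪w i, w k - w i⟫) := by rw [hwa]; ring
    _ = -(c * N) * ∑ i, ∑ j, p i j * ‖w i - w j‖ ^ 2 := by rw [h2]; ring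
end Aux


/-- **Discrete enstrophy differential inequality.**  For any solution of the Cucker–Smale
system, for every `t ≥ 0`,
`d/dt |δv(t)|₂² ≤ −κ·inf{φ(h) : 0 ≤ h ≤ D(t)}·|δv(t)|₂²`, where
`D(t) = max_{i,j} |xᵢ(t) − xⱼ(t)|` is the diameter of the positions. -/
theorem discrete_enstrophy_inequality
    (d N : ℕ) (φ : ℝ → ℝ) (κ : ℝ) (S : CSSys d N φ κ)
    (hN : 0 < N) (hκ : 0 < κ) (hφ0 : ∀ h, 0 ≤ φ h) :
    ∀ t ∈ Set.Ici (0:ℝ), ∃ D : ℝ,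
      HasDerivWithinAt (fun s => (dv2 S s) ^ 2) D (Set.Ici (0:ℝ)) t ∧
      D ≤ -κ * sInf (φ '' Set.Icc 0 (⨆ p : Fin N × Fin N, ‖S.x t p.1 - S.x t p.2‖)) *
            (dv2 S t) ^ 2 := by
  intro t ht
  classical
  set E := EuclideanSpace ℝ (Fin d)
  set w : Fin N → E := S.v t with hw
  set p : Fin N → Fin N → ℝ := fun i j => φ (‖S.x t i - S.x t j‖) with hp
  set a : Fin N → E := fun i => (κ / (N:ℝ)) • ∑ k, p i k • (w k - w i) with ha
  have psymm : ∀ i j, p i j = p j i := by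
    intro i j; simp only [hp]; rw [norm_sub_rev]
  have hNpos : (0:ℝ) < (N:ℝ) := by exact_mod_cast hN
  -- the squared dv2 function
  have hsq : ∀ s : ℝ, dv2 S s ^ 2
      = ((N:ℝ) ^ 2)⁻¹ * ∑ i, ∑ j, ‖S.v s i - S.v s j‖ ^ 2 := by
    intro s
    rw [dv2, Real.sq_sqrt]
    positivity
  set D : ℝ := ((N:ℝ) ^ 2)⁻¹ * ∑ i, ∑ j,
      ((@inner ℝ E _ (w i - w j) (a i - a j)) + @inner ℝ E _ (a i - a j) (w i - w j))
    with hD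
  refine ⟨D, ?_, ?_⟩
  · have hfun : (fun s => dv2 S s ^ 2)
        = fun s => ((N:ℝ) ^ 2)⁻¹ * ∑ i, ∑ j, ‖S.v s i - S.v s j‖ ^ 2 :=
      funext hsq
    rw [hfun, hD]
    refine HasDerivWithinAt.const_mul _ ?_
    refine HasDerivWithinAt.fun_sum fun i _ => HasDerivWithinAt.fun_sum fun j _ => ?_
    have hij : HasDerivWithinAt (fun s => S.v s i - S.v s j) (a i - a j)
        (Set.Ici (0:ℝ)) t := (S.hv i t ht).sub (S.hv j t ht)
    have h := hij.inner ℝ hij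
    have heq : (fun s => (@inner ℝ E _ (S.v s i - S.v s j) (S.v s i - S.v s j)))
        = fun s => ‖S.v s i - S.v s j‖ ^ 2 :=
      funext fun s => real_inner_self_eq_norm_sq _
    rw [heq] at h
    exact h
  · -- the bound
    set m : ℝ := sInf (φ '' Set.Icc 0 (⨆ q : Fin N × Fin N, ‖S.x t q.1 - S.x t q.2‖))
      with hm
    have hm0 : 0 ≤ m := by
      apply Real.sInf_nonneg
      rintro y ⟨h, -, rfl⟩
      exact hφ0 h
    have hmle : ∀ i j, m ≤ p i j := by
      intro i j
      refine csInf_le ⟨0, ?_⟩ ?_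
      · rintro y ⟨h, -, rfl⟩; exact hφ0 h
      · exact ⟨‖S.x t i - S.x t j‖,
          ⟨norm_nonneg _, le_ciSup (f := fun q : Fin N × Fin N => ‖S.x t q.1 - S.x t q.2‖)
            (Set.Finite.bddAbove (Set.finite_range _)) (i, j)⟩, rfl⟩
    -- the key identity
    have hkey := cs_key w p (κ / (N:ℝ)) psymm
    have hDval : D = -(2 * κ) * ((N:ℝ) ^ 2)⁻¹ * ∑ i, ∑ j, p i j * ‖w i - w j‖ ^ 2 := by
      rw [hD]
      have : ∀ i j : Fin N,
          ((@inner ℝ E _ (w i - w j) (a i - a j)) + @inner ℝ E _ (a i - a j) (w i - w j))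
            = 2 * @inner ℝ E _ (w i - w j) (a i - a j) := by
        intro i j; rw [real_inner_comm (a i - a j)]; ring
      simp only [this, ← Finset.mul_sum]
      rw [ha] at *
      rw [hkey]
      field_simp
    have hQ : m * (∑ i, ∑ j, ‖w i - w j‖ ^ 2) ≤ ∑ i, ∑ j, p i j * ‖w i - w j‖ ^ 2 := by
      rw [Finset.mul_sum]
      refine Finset.sum_le_sum fun i _ => ?_
      rw [Finset.mul_sum]
      refine Finset.sum_le_sum fun j _ => ?_
      exact mul_le_mul_of_nonneg_right (hmle i j) (by positivity)
    have hQ0 : 0 ≤ m * (∑ i, ∑ j, ‖w i - w j‖ ^ 2) := by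
      apply mul_nonneg hm0
      positivity
    rw [hDval, hsq t]
    have hn : (0:ℝ) < ((N:ℝ) ^ 2)⁻¹ := by positivity
    have hwv : ∑ i, ∑ j, ‖S.v t i - S.v t j‖ ^ 2 = ∑ i, ∑ j, ‖w i - w j‖ ^ 2 := rfl
    rw [hwv]
    set P := ∑ i, ∑ j, p i j * ‖w i - w j‖ ^ 2
    set Q := ∑ i, ∑ j, ‖w i - w j‖ ^ 2
    have h1 : -(2 * κ) * ((N:ℝ) ^ 2)⁻¹ * P ≤ -(2 * κ) * ((N:ℝ) ^ 2)⁻¹ * (m * Q) := by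
      have := mul_le_mul_of_nonneg_left hQ (le_of_lt (mul_pos (by linarith : (0:ℝ) < 2 * κ) hn))
      nlinarith
    refine h1.trans ?_
    have : -κ * m * (((N:ℝ) ^ 2)⁻¹ * Q) = -(κ) * ((N:ℝ) ^ 2)⁻¹ * (m * Q) := by ring
    rw [this]
    nlinarith [mul_pos hκ hn, hQ0]
end
end

section
/- Maximum principle for velocity fluctuations: For any solution of the Cucker–Smale system (with nonnegative kernel φ), the velocity diameter is nonincreasing: for all 0 ≤ s ≤ t, |δv(t)|_∞ ≤ |δv(s)|_∞. -/
open MeasureTheory Metric Set Filter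
open scoped RealInnerProductSpace

noncomputable section

namespace CSAux

variable {d N : ℕ} {φ : ℝ → ℝ} {κ : ℝ}

/-- velocity acceleration of agent i at time x -/
def W (S : CSSys d N φ κ) (x : ℝ) (i : Fin N) : EuclideanSpace ℝ (Fin d) :=
  (κ / (N:ℝ)) • ∑ k, φ (‖S.x x i - S.x x k‖) • (S.v x k - S.v x i)

lemma pair_deriv (S : CSSys d N φ κ) (i j : Fin N) {x : ℝ} (hx : (0:ℝ) ≤ x) :
    HasDerivWithinAt (fun t => ‖S.v t i - S.v t j‖ ^ 2)
      (2 * ⟪S.v x i - S.v x j, W S x i - W S x j⟫) (Set.Ici (0:ℝ)) x := by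
  have hh : HasDerivWithinAt (fun t => S.v t i - S.v t j) (W S x i - W S x j) (Set.Ici (0:ℝ)) x :=
    (S.hv i x hx).sub (S.hv j x hx)
  have := hh.inner ℝ hh
  simp only [real_inner_self_eq_norm_sq] at this
  convert this using 1
  any_goals rfl
  rw [real_inner_comm (W S x i - W S x j)]
  ring

lemma inner_nonpos (S : CSSys d N φ κ) (hκ : 0 ≤ κ) (hφ0 : ∀ h, 0 ≤ φ h)
    (x : ℝ) (i j : Fin N)
    (hmax : ∀ k l : Fin N, ‖S.v x k - S.v x l‖ ≤ ‖S.v x i - S.v x j‖) :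
    ⟪S.v x i - S.v x j, W S x i - W S x j⟫ ≤ 0 := by
  set h : EuclideanSpace ℝ (Fin d) := S.v x i - S.v x j with hh
  have hκN : 0 ≤ κ / (N:ℝ) := div_nonneg hκ (Nat.cast_nonneg N)
  rw [inner_sub_right]
  have h1 : ⟪h, W S x i⟫ ≤ 0 := by
    rw [W, inner_smul_right, inner_sum]
    apply mul_nonpos_of_nonneg_of_nonpos hκN
    apply Finset.sum_nonpos
    intro k _
    rw [inner_smul_right]
    apply mul_nonpos_of_nonneg_of_nonpos (hφ0 _)
    have : S.v x k - S.v x i = (S.v x k - S.v x j) - h := by rw [hh]; abel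
    rw [this, inner_sub_right, real_inner_self_eq_norm_sq]
    have := real_inner_le_norm h (S.v x k - S.v x j)
    nlinarith [hmax k j, norm_nonneg h]
  have h2 : 0 ≤ ⟪h, W S x j⟫ := by
    rw [W, inner_smul_right, inner_sum]
    apply mul_nonneg hκN
    apply Finset.sum_nonneg
    intro k _
    rw [inner_smul_right]
    apply mul_nonneg (hφ0 _)
    have : S.v x k - S.v x j = (S.v x k - S.v x i) + h := by rw [hh]; abel
    rw [this, inner_add_right, real_inner_self_eq_norm_sq]
    have := abs_real_inner_le_norm h (S.v x k - S.v x i)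
    have := abs_le.mp this
    nlinarith [hmax k i, norm_nonneg h]
  linarith

end CSAux


/-- **Maximum principle for velocity fluctuations.**  For any solution of the Cucker–Smale
system with nonnegative kernel `φ`, the velocity diameter is nonincreasing:
`|δv(t)|_∞ ≤ |δv(s)|_∞` for all `0 ≤ s ≤ t`. -/
theorem velocity_diameter_nonincreasing
    (d N : ℕ) (φ : ℝ → ℝ) (κ : ℝ) (S : CSSys d N φ κ)
    (hN : 0 < N) (hκ : 0 < κ) (hφ0 : ∀ h, 0 ≤ φ h) :
    ∀ s t : ℝ, 0 ≤ s → s ≤ t → dvInf S t ≤ dvInf S s := by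
  intro s t hs hst
  haveI : Nonempty (Fin N) := Fin.pos_iff_nonempty.mp hN
  have hne : (Finset.univ : Finset (Fin N × Fin N)).Nonempty := Finset.univ_nonempty
  set g : Fin N × Fin N → ℝ → ℝ := fun p u => ‖S.v u p.1 - S.v u p.2‖ ^ 2 with hg
  set f : ℝ → ℝ := fun u => Finset.univ.sup' hne (fun p => g p u) with hf
  -- each g p is continuous on Ici 0
  have hgc : ∀ p : Fin N × Fin N, ContinuousOn (g p) (Set.Ici (0:ℝ)) := by
    intro p u hu
    exact (CSAux.pair_deriv S p.1 p.2 hu).continuousWithinAt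
  have hfc : ContinuousOn f (Set.Icc s t) := by
    apply (ContinuousOn.finset_sup'_apply hne (fun p _ => hgc p)).mono
    exact (Set.Icc_subset_Ici_iff hst).mpr hs
  -- main estimate
  have key : f t ≤ f s := by
    have := image_le_of_liminf_slope_right_le_deriv_boundary (B := fun _ => f s)
      (B' := fun _ => 0) hfc le_rfl continuousOn_const
      (fun x _ => hasDerivWithinAt_const x _ _)
      ?_ (Set.right_mem_Icc.mpr hst)
    · exact this
    intro x hx r hr
    have hr' : (0:ℝ) < r := hr
    have hx0 : (0:ℝ) ≤ x := le_trans hs hx.1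
    apply Filter.Eventually.frequently
    have hev : ∀ p : Fin N × Fin N, ∀ᶠ z in nhdsWithin x (Set.Ioi x),
        g p z < f x + r * (z - x) := by
      intro p
      by_cases hpx : g p x = f x
      · -- p is an achiever; derivative ≤ 0 < r
        have hmax : ∀ k l : Fin N, ‖S.v x k - S.v x l‖ ≤ ‖S.v x p.1 - S.v x p.2‖ := by
          intro k l
          have h1 : g (k, l) x ≤ f x := Finset.le_sup' (fun q => g q x) (Finset.mem_univ (k,l))
          rw [← hpx] at h1
          exact le_of_pow_le_pow_left₀ two_ne_zero (norm_nonneg _) h1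
        have hD := (CSAux.pair_deriv S p.1 p.2 hx0).mono (Set.Ici_subset_Ici.mpr hx0)
        have hDle : 2 * ⟪S.v x p.1 - S.v x p.2, CSAux.W S x p.1 - CSAux.W S x p.2⟫ ≤ 0 := by
          have := CSAux.inner_nonpos S hκ.le hφ0 x p.1 p.2 hmax
          linarith
        have hslope : Filter.Tendsto (slope (g p) x) (nhdsWithin x (Set.Ioi x))
            (nhds (2 * ⟪S.v x p.1 - S.v x p.2, CSAux.W S x p.1 - CSAux.W S x p.2⟫)) := by
          have := hasDerivWithinAt_iff_tendsto_slope.mp hD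
          rwa [Set.Ici_sdiff_left] at this
        have : ∀ᶠ z in nhdsWithin x (Set.Ioi x), slope (g p) x z < r :=
          hslope (Iio_mem_nhds (lt_of_le_of_lt hDle hr))
        filter_upwards [this, self_mem_nhdsWithin] with z hz (hz' : z ∈ Set.Ioi x)
        have hzx : 0 < z - x := sub_pos.mpr hz'
        rw [slope_def_field] at hz
        have := (div_lt_iff₀ hzx).mp hz
        rw [hpx] at this
        linarith
      · -- g p x < f x; continuity
        have hlt : g p x < f x :=
          lt_of_le_of_ne (Finset.le_sup' (fun q => g q x) (Finset.mem_univ p)) hpx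
        have hc : ContinuousWithinAt (g p) (Set.Ici x) x :=
          ((CSAux.pair_deriv S p.1 p.2 hx0).mono (Set.Ici_subset_Ici.mpr hx0)).continuousWithinAt
        have : ∀ᶠ z in nhdsWithin x (Set.Ici x), g p z < f x :=
          hc (Iio_mem_nhds hlt)
        have h2 : ∀ᶠ z in nhdsWithin x (Set.Ioi x), g p z < f x :=
          (nhdsWithin_mono x Set.Ioi_subset_Ici_self) this
        filter_upwards [h2, self_mem_nhdsWithin] with z hz (hz' : z ∈ Set.Ioi x)
        have hzx : 0 < z - x := sub_pos.mpr hz'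
        nlinarith
    have hall : ∀ᶠ z in nhdsWithin x (Set.Ioi x),
        ∀ p ∈ (Finset.univ : Finset (Fin N × Fin N)), g p z < f x + r * (z - x) := by
      rw [Filter.eventually_all_finset]
      exact fun p _ => hev p
    filter_upwards [hall, self_mem_nhdsWithin] with z hz (hz' : z ∈ Set.Ioi x)
    have hzx : 0 < z - x := sub_pos.mpr hz'
    have : f z < f x + r * (z - x) := by
      rw [hf]
      exact (Finset.sup'_lt_iff hne).mpr (fun p hp => hz p hp)
    rw [slope_def_field]
    rw [div_lt_iff₀ hzx]
    linarith
  -- convert back to dvInf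
  have hdvEq : ∀ u : ℝ, dvInf S u = Finset.univ.sup' hne (fun p : Fin N × Fin N =>
      ‖S.v u p.1 - S.v u p.2‖) := by
    intro u
    rw [dvInf, ← Finset.sup'_univ_eq_ciSup]
  have hdvs0 : 0 ≤ dvInf S s := by
    rw [hdvEq]
    obtain ⟨i⟩ := (inferInstance : Nonempty (Fin N))
    exact le_trans (norm_nonneg (S.v s i - S.v s i))
      (Finset.le_sup' (fun q : Fin N × Fin N => ‖S.v s q.1 - S.v s q.2‖) (Finset.mem_univ (i, i)))
  have hfs : f s ≤ (dvInf S s) ^ 2 := by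
    apply Finset.sup'_le
    intro p _
    rw [hdvEq]
    exact pow_le_pow_left₀ (norm_nonneg _)
      (Finset.le_sup' (fun q : Fin N × Fin N => ‖S.v s q.1 - S.v s q.2‖) (Finset.mem_univ p)) 2
  rw [hdvEq]
  apply Finset.sup'_le
  intro p _
  have h1 : g p t ≤ (dvInf S s) ^ 2 :=
    le_trans (Finset.le_sup' (fun q => g q t) (Finset.mem_univ p)) (le_trans key hfs)
  exact le_of_pow_le_pow_left₀ two_ne_zero hdvs0 h1
end
end

section
/- No flocking for weak short-range coupling (counterexample of Section 6): Let φ : ℝ → [0,∞) be continuous with φ(h) = 0 for h ≥ 8, set Φ(s) := ∫₀^s φ(h) dh and M := sup_{s ≥ 0} Φ(s), and assume 0 < M < ∞. Let x, v : [0,∞) → ℝ be C¹ with ẋ = v, v̇ = −2κ·v·φ(x), x(0) = 2, v(0) = 2. If 0 < κ ≤ v(0)/(16 M), then for all t ≥ 0 one has v(t) ≥ v(0)/2 and x(t) ≥ x(0) + (v(0)/2)·t; in particular the relative velocity v(t) does not converge to 0, so the two particles do not flock. -/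
open Set Filter
open MeasureTheory intervalIntegral

noncomputable section

/-- **No flocking for weak short-range coupling** (counterexample of Section 6).
Let `φ` be a continuous nonnegative kernel vanishing on `[8,∞)`, `Φ(s) = ∫₀ˢ φ(h) dh` its
primitive and `M = sup_{s ≥ 0} Φ(s)` with `0 < M < ∞`.  For the two-particle relative
dynamics `ẋ = v`, `v̇ = −2κvφ(x)` with `x(0) = 2`, `v(0) = 2`, if `0 < κ ≤ v(0)/(16M)` then
`v(t) ≥ v(0)/2` and `x(t) ≥ x(0) + (v(0)/2)·t` for all `t ≥ 0`; in particular the relative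
velocity does not converge to `0`, so the two particles do not flock. -/
theorem no_flocking_weak_coupling
    (φ : ℝ → ℝ) (hφc : Continuous φ) (hφ0 : ∀ h, 0 ≤ φ h)
    (hφ_supp : ∀ h ≥ (8:ℝ), φ h = 0)
    (M : ℝ)
    (hbdd : BddAbove ((fun s => ∫ h in (0:ℝ)..s, φ h) '' Set.Ici (0:ℝ)))
    (hM : M = sSup ((fun s => ∫ h in (0:ℝ)..s, φ h) '' Set.Ici (0:ℝ)))
    (hMpos : 0 < M)
    (κ : ℝ) (x v : ℝ → ℝ)
    (hx : ∀ t ∈ Set.Ici (0:ℝ), HasDerivWithinAt x (v t) (Set.Ici (0:ℝ)) t)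
    (hv : ∀ t ∈ Set.Ici (0:ℝ),
      HasDerivWithinAt v (-2 * κ * v t * φ (x t)) (Set.Ici (0:ℝ)) t)
    (hx0 : x 0 = 2) (hv0 : v 0 = 2)
    (hκpos : 0 < κ) (hκle : κ ≤ v 0 / (16 * M)) :
    (∀ t ≥ (0:ℝ), v 0 / 2 ≤ v t ∧ x 0 + (v 0 / 2) * t ≤ x t) ∧
      ¬ Filter.Tendsto v Filter.atTop (nhds 0) := by
  set Φ : ℝ → ℝ := fun s => ∫ h in (0:ℝ)..s, φ h with hΦdef
  have hΦd : ∀ s, HasDerivAt Φ (φ s) s := fun s =>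
    integral_hasDerivAt_right (hφc.intervalIntegrable _ _)
      (hφc.stronglyMeasurableAtFilter _ _) hφc.continuousAt
  have hΦnonneg : ∀ s ≥ (0:ℝ), 0 ≤ Φ s := fun s hs =>
    intervalIntegral.integral_nonneg hs (fun u _ => hφ0 u)
  have hΦleM : ∀ s, Φ s ≤ M := by
    intro s
    rcases le_or_gt 0 s with hs | hs
    · rw [hM]; exact le_csSup hbdd ⟨s, hs, rfl⟩
    · have h1 : Φ s ≤ 0 := by
        have : 0 ≤ ∫ h in s..(0:ℝ), φ h :=
          intervalIntegral.integral_nonneg hs.le (fun u _ => hφ0 u)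
        have hsymm : Φ s = -∫ h in s..(0:ℝ), φ h := intervalIntegral.integral_symm s 0
        linarith
      linarith
  have hκM : κ * (16 * M) ≤ v 0 := (le_div_iff₀ (by positivity)).mp hκle
  -- Energy conservation
  set E : ℝ → ℝ := fun t => v t + 2 * κ * Φ (x t) with hEdef
  have hE : ∀ t ∈ Set.Ici (0:ℝ), HasDerivWithinAt E 0 (Set.Ici (0:ℝ)) t := by
    intro t ht
    have h1 : HasDerivWithinAt (fun u => Φ (x u)) (φ (x t) * v t) (Set.Ici (0:ℝ)) t :=
      (hΦd (x t)).comp_hasDerivWithinAt t (hx t ht)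
    have := (hv t ht).add (h1.const_mul (2 * κ))
    exact this.congr_deriv (by ring)
  have hEcont : ContinuousOn E (Set.Ici (0:ℝ)) :=
    fun t ht => (hE t ht).continuousWithinAt
  have hint : ∀ t ∈ interior (Set.Ici (0:ℝ)),
      HasDerivWithinAt E ((fun _ => (0:ℝ)) t) (interior (Set.Ici (0:ℝ))) t :=
    fun t ht => (hE t (interior_subset ht)).mono interior_subset
  have hmono : MonotoneOn E (Set.Ici (0:ℝ)) :=
    monotoneOn_of_hasDerivWithinAt_nonneg (convex_Ici 0) hEcont hint (fun _ _ => le_refl 0)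
  have hanti : MonotoneOn (fun t => -E t) (Set.Ici (0:ℝ)) :=
    monotoneOn_of_hasDerivWithinAt_nonneg (convex_Ici 0) hEcont.neg
      (fun t ht => ((hE t (interior_subset ht)).mono interior_subset).neg)
      (fun _ _ => by simp)
  have hEconst : ∀ t ≥ (0:ℝ), E t = E 0 := by
    intro t ht
    have h1 := hmono (self_mem_Ici) (mem_Ici.2 ht) ht
    have h2 := hanti (self_mem_Ici) (mem_Ici.2 ht) ht
    simp only at h2
    linarith
  -- Lower bound on v
  have hvlb : ∀ t ≥ (0:ℝ), v 0 / 2 ≤ v t := by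
    intro t ht
    have hc := hEconst t ht
    simp only [hEdef] at hc
    have h1 : Φ (x t) ≤ M := hΦleM (x t)
    have h2 : 0 ≤ Φ (x 0) := hΦnonneg (x 0) (by rw [hx0]; norm_num)
    nlinarith [hκpos.le, hMpos.le]
  -- Lower bound on x
  have hxlb : ∀ t ≥ (0:ℝ), x 0 + (v 0 / 2) * t ≤ x t := by
    have hg : MonotoneOn (fun t => x t - (v 0 / 2) * t) (Set.Ici (0:ℝ)) := by
      apply monotoneOn_of_hasDerivWithinAt_nonneg (convex_Ici 0)
        (f' := fun t => v t - v 0 / 2)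
      · exact fun t ht => ((hx t ht).sub
          ((hasDerivWithinAt_id t _).const_mul (v 0 / 2))).continuousWithinAt
      · intro t ht
        have h := ((hx t (interior_subset ht)).sub
          ((hasDerivWithinAt_id t (Set.Ici 0)).const_mul (v 0 / 2))).mono
          (interior_subset : interior (Set.Ici (0:ℝ)) ⊆ Set.Ici 0)
        exact h.congr_deriv (by ring)
      · intro t ht
        have := hvlb t (le_of_lt (by simpa using ht))
        linarith
    intro t ht
    have := hg self_mem_Ici (mem_Ici.2 ht) ht
    simp only [mul_zero, sub_zero] at this
    linarith
  refine ⟨fun t ht => ⟨hvlb t ht, hxlb t ht⟩, ?_⟩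
  intro hcon
  obtain ⟨N, hN⟩ := Metric.tendsto_atTop.mp hcon (v 0 / 2) (by rw [hv0]; norm_num)
  have h1 := hN (max N 0) (le_max_left _ _)
  have h2 := hvlb (max N 0) (le_max_right _ _)
  rw [Real.dist_eq, sub_zero] at h1
  have := abs_lt.mp h1
  linarith
end
end
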